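/- Let p(·) be a measurable exponent with 0 < p₋ ≤ p₊ < ∞ on a probability space, 0 < q ≤ ∞, and b a slowly varying function. Then there is a constant C such that for all measurable f, g: ‖f + g‖_{p(·),q,b} ≤ C(‖f‖_{p(·),q,b} + ‖g‖_{p(·),q,b}). -/

import Mathlib

open MeasureTheory Set ENNReal Filter Topology

noncomputable section

/-- A measurable function `b : [1,∞) → (0,∞)` is slowly varying if for every `ε > 0`,
`t ^ ε * b t` is equivalent (up to multiplicative constants) to a nondecreasing function
and `t ^ (-ε) * b t` is equivalent to a nonincreasing function on `[1,∞)`. -/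
def SlowlyVarying (b : ℝ → ℝ) : Prop :=
  (∀ t : ℝ, 1 ≤ t → 0 < b t) ∧
  ∀ ε : ℝ, 0 < ε →
    ((∃ g : ℝ → ℝ, MonotoneOn g (Set.Ici 1) ∧ ∃ c > (0:ℝ), ∃ C > (0:ℝ),
        ∀ t : ℝ, 1 ≤ t → c * g t ≤ t ^ ε * b t ∧ t ^ ε * b t ≤ C * g t) ∧
     (∃ g : ℝ → ℝ, AntitoneOn g (Set.Ici 1) ∧ ∃ c > (0:ℝ), ∃ C > (0:ℝ),
        ∀ t : ℝ, 1 ≤ t → c * g t ≤ t ^ (-ε) * b t ∧ t ^ (-ε) * b t ≤ C * g t))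

/-- `γ_b(t) = b (max {t, t⁻¹})` for `t > 0`. -/
def gammaB (b : ℝ → ℝ) (t : ℝ) : ℝ := b (max t t⁻¹)

variable {Ω : Type*} [MeasurableSpace Ω]

/-- The variable Lebesgue quasi-norm
`‖f‖_{p(·)} = inf {λ > 0 : ∫ (|f|/λ)^{p(·)} dμ ≤ 1}`. -/
def vLpNorm (μ : Measure Ω) (p : Ω → ℝ) (f : Ω → ℝ) : ℝ :=
  sInf {lam : ℝ | 0 < lam ∧ ∫⁻ ω, ENNReal.ofReal ((|f ω| / lam) ^ p ω) ∂μ ≤ 1}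

/-- `f ∈ L_{p(·)}` : the modular is finite for some `λ > 0`. -/
def MemVLp (μ : Measure Ω) (p : Ω → ℝ) (f : Ω → ℝ) : Prop :=
  ∃ lam > (0:ℝ), ∫⁻ ω, ENNReal.ofReal ((|f ω| / lam) ^ p ω) ∂μ ≤ 1

/-- `‖χ_A‖_{p(·)}`. -/
def chiNorm (μ : Measure Ω) (p : Ω → ℝ) (A : Set Ω) : ℝ :=
  vLpNorm μ p (A.indicator 1)

/-- The variable Lorentz–Karamata quasi-norm `‖f‖_{p(·),q,b}` (with `q ∈ (0,∞]`). -/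
def vLKNorm (μ : Measure Ω) (p : Ω → ℝ) (q : ℝ≥0∞) (b : ℝ → ℝ) (f : Ω → ℝ) : ℝ≥0∞ :=
  if q = ∞ then
    ⨆ t ∈ Set.Ioi (0:ℝ), ENNReal.ofReal
      (t * chiNorm μ p {ω | t < |f ω|} * gammaB b (chiNorm μ p {ω | t < |f ω|}))
  else
    (∫⁻ t in Set.Ioi (0:ℝ), ENNReal.ofReal
      ((t * chiNorm μ p {ω | t < |f ω|} * gammaB b (chiNorm μ p {ω | t < |f ω|})) ^ q.toReal / t))
      ^ (1 / q.toReal)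

lemma lintegral_Ioi_half (F : ℝ → ℝ≥0∞) :
    ∫⁻ t in Set.Ioi (0:ℝ), F (t/2) = 2 * ∫⁻ s in Set.Ioi (0:ℝ), F s := by
  set e : ℝ ≃ᵐ ℝ := (Homeomorph.mulLeft₀ (2:ℝ) two_ne_zero).toMeasurableEquiv with he
  have hefun : (e : ℝ → ℝ) = fun x => 2 * x := rfl
  have h1 : ∫⁻ t, F (t/2) ∂((volume.restrict (Set.Ioi (0:ℝ))).map e)
      = ∫⁻ s in Set.Ioi (0:ℝ), F s := by
    rw [lintegral_map_equiv (fun t => F (t/2)) e]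
    congr 1
    funext s
    have : (e s : ℝ) = 2 * s := rfl
    rw [this]
    ring_nf
  have hpre : (e : ℝ → ℝ) ⁻¹' (Set.Ioi (0:ℝ)) = Set.Ioi (0:ℝ) := by
    ext x
    simp [hefun]
  have h2 : (volume.restrict (Set.Ioi (0:ℝ))).map e
      = (volume.map e).restrict (Set.Ioi (0:ℝ)) := by
    rw [MeasurableEquiv.restrict_map e volume (Set.Ioi (0:ℝ)), hpre]
  have h3 : (volume : Measure ℝ).map e = ENNReal.ofReal |(2:ℝ)⁻¹| • volume := by
    rw [show (⇑e) = (((2:ℝ)) * ·) from rfl]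
    exact Real.map_volume_mul_left two_ne_zero
  rw [h2, h3, Measure.restrict_smul, lintegral_smul_measure] at h1
  rw [← h1]
  have : ENNReal.ofReal |(2:ℝ)⁻¹| = 2⁻¹ := by
    rw [abs_of_pos (by norm_num : (0:ℝ) < 2⁻¹)]
    rw [ENNReal.ofReal_inv_of_pos (by norm_num : (0:ℝ) < 2)]
    norm_num
  rw [this, smul_eq_mul, ← mul_assoc, ENNReal.mul_inv_cancel (by norm_num) (by norm_num), one_mul]

/-- Extraction of the antitone comparison function at `ε = 1`, together with
positivity and a quasi-antitonicity over bounded ratios. -/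
lemma slowly_k {b : ℝ → ℝ} (hb : SlowlyVarying b) (D : ℝ) (hD : 1 ≤ D) :
    ∃ (k : ℝ → ℝ) (c C κ : ℝ), 0 < c ∧ 0 < C ∧ 0 < κ ∧
      AntitoneOn k (Set.Ici 1) ∧ (∀ t, 1 ≤ t → 0 < k t) ∧
      (∀ t, 1 ≤ t → c * k t ≤ t⁻¹ * b t ∧ t⁻¹ * b t ≤ C * k t) ∧
      (∀ s u, 1 ≤ s → 1 ≤ u → u ≤ D * s → k s ≤ κ * k u) := by
  obtain ⟨⟨g, hgmono, c₁, hc₁, C₁, hC₁, hg⟩, ⟨k, hkanti, c₂, hc₂, C₂, hC₂, hk⟩⟩ :=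
    hb.2 1 one_pos
  have hk' : ∀ t, 1 ≤ t → c₂ * k t ≤ t⁻¹ * b t ∧ t⁻¹ * b t ≤ C₂ * k t := by
    intro t ht
    have := hk t ht
    rwa [Real.rpow_neg_one] at this
  have hg' : ∀ t, 1 ≤ t → c₁ * g t ≤ t * b t ∧ t * b t ≤ C₁ * g t := by
    intro t ht
    have := hg t ht
    rwa [Real.rpow_one] at this
  have hbpos := hb.1
  have hkpos : ∀ t, 1 ≤ t → 0 < k t := by
    intro t ht
    have h1 : (0:ℝ) < t⁻¹ * b t := by
      have ht0 : (0:ℝ) < t := lt_of_lt_of_le one_pos ht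
      exact mul_pos (inv_pos.mpr ht0) (hbpos t ht)
    nlinarith [(hk' t ht).2]
  -- inverse doubling for k
  have hdouble : ∀ u, 1 ≤ u → c₂ * c₁ * k u ≤ C₂ * C₁ * (D * D) * k (D * u) := by
    intro u hu
    have hu0 : (0:ℝ) < u := lt_of_lt_of_le one_pos hu
    have hDu : 1 ≤ D * u := by nlinarith
    have hDu0 : (0:ℝ) < D * u := lt_of_lt_of_le one_pos hDu
    have h1 : c₂ * k u ≤ u⁻¹ * b u := (hk' u hu).1
    have h2 : u * b u ≤ C₁ * g u := (hg' u hu).2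
    have h3 : g u ≤ g (D * u) :=
      hgmono (Set.mem_Ici.mpr hu) (Set.mem_Ici.mpr hDu) (le_mul_of_one_le_left hu0.le hD)
    have h4 : c₁ * g (D * u) ≤ (D * u) * b (D * u) := (hg' (D * u) hDu).1
    have h5 : (D * u)⁻¹ * b (D * u) ≤ C₂ * k (D * u) := (hk' (D * u) hDu).2
    -- clear inverses
    have h1' : c₂ * u * k u ≤ b u := by
      nlinarith [mul_le_mul_of_nonneg_left h1 hu0.le, mul_inv_cancel₀ hu0.ne',
        hbpos u hu]
    have h5' : b (D * u) ≤ (D * u) * (C₂ * k (D * u)) := by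
      nlinarith [mul_le_mul_of_nonneg_left h5 hDu0.le, mul_inv_cancel₀ hDu0.ne',
        hbpos (D * u) hDu]
    -- chain:  c₂ c₁ u² k u ≤ c₁ u b u ≤ c₁ C₁ g u ≤ c₁ C₁ g(Du) ≤ C₁ (Du) b(Du) ≤ C₁ C₂ (Du)² k(Du)
    have hgu0 : 0 < g u := by nlinarith [hbpos u hu, mul_pos hu0 (hbpos u hu)]
    have key : c₂ * c₁ * (u * u) * k u ≤ C₂ * C₁ * (D * u) * (D * u) * k (D * u) := by
      nlinarith [mul_le_mul_of_nonneg_left h1' (mul_nonneg hc₁.le hu0.le),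
        mul_le_mul_of_nonneg_left h2 hc₁.le,
        mul_le_mul_of_nonneg_left h3 (mul_nonneg hc₁.le hC₁.le),
        mul_le_mul_of_nonneg_left h4 hC₁.le,
        mul_le_mul_of_nonneg_left h5' hC₁.le,
        mul_pos hu0 hu0, hkpos u hu, hkpos (D*u) hDu]
    have hu2 : (0:ℝ) < u * u := mul_pos hu0 hu0
    nlinarith [key, hkpos (D*u) hDu, mul_pos (mul_pos hC₂ hC₁) (mul_pos hDu0 hDu0)]
  refine ⟨k, c₂, C₂, max (C₂ * C₁ * (D * D) / (c₂ * c₁)) 1, hc₂, hC₂,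
    lt_of_lt_of_le one_pos (le_max_right _ _), hkanti, hkpos, hk', ?_⟩
  intro s u hs hu hus
  set κ₀ := C₂ * C₁ * (D * D) / (c₂ * c₁) with hκ₀
  have hκ₀pos : 0 < κ₀ := by positivity
  rcases le_or_gt u s with h | h
  · calc k s ≤ k u := hkanti (Set.mem_Ici.mpr hu) (Set.mem_Ici.mpr hs) h
      _ = 1 * k u := (one_mul _).symm
      _ ≤ max κ₀ 1 * k u :=
        mul_le_mul_of_nonneg_right (le_max_right _ _) (hkpos u hu).le
  · have hDs : 1 ≤ D * s := by nlinarith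
    have h6 : k (D * s) ≤ k u :=
      hkanti (Set.mem_Ici.mpr hu) (Set.mem_Ici.mpr hDs) hus
    have h7 : k s ≤ κ₀ * k (D * s) := by
      have := hdouble s hs
      rw [hκ₀, div_mul_eq_mul_div, le_div_iff₀ (by positivity)]
      nlinarith
    calc k s ≤ κ₀ * k (D * s) := h7
      _ ≤ κ₀ * k u := mul_le_mul_of_nonneg_left h6 hκ₀pos.le
      _ ≤ max κ₀ 1 * k u :=
        mul_le_mul_of_nonneg_right (le_max_left _ _) (hkpos u hu).le

lemma phi_facts {b : ℝ → ℝ} (hb : SlowlyVarying b) (D : ℝ) (hD : 1 ≤ D) :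
    ∃ (k : ℝ → ℝ) (c₂ C₂ K : ℝ), 0 < c₂ ∧ 0 < C₂ ∧ 0 < K ∧
      (∀ t, 1 ≤ t → 0 < k t) ∧ AntitoneOn k (Set.Ici 1) ∧
      (∀ x, 0 < x → x ≤ 1 →
        c₂ * k x⁻¹ ≤ x * gammaB b x ∧ x * gammaB b x ≤ C₂ * k x⁻¹) ∧
      (∀ x y, 0 < x → x ≤ 1 → 0 < y → y ≤ 1 → x ≤ D * y →
        x * gammaB b x ≤ K * (y * gammaB b y)) := by
  obtain ⟨k, c₂, C₂, κ, hc₂, hC₂, hκ, hkanti, hkpos, hk, hquasi⟩ := slowly_k hb D hD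
  have hinv : ∀ x : ℝ, 0 < x → x ≤ 1 → 1 ≤ x⁻¹ := by
    intro x hx hx1
    nlinarith [mul_inv_cancel₀ hx.ne', inv_pos.mpr hx]
  have hgamma : ∀ x : ℝ, 0 < x → x ≤ 1 → x * gammaB b x = (x⁻¹)⁻¹ * b x⁻¹ := by
    intro x hx hx1
    have h1 : max x x⁻¹ = x⁻¹ := max_eq_right (le_trans hx1 (hinv x hx hx1))
    rw [gammaB, h1, inv_inv]
  have hbnds : ∀ x, 0 < x → x ≤ 1 →
      c₂ * k x⁻¹ ≤ x * gammaB b x ∧ x * gammaB b x ≤ C₂ * k x⁻¹ := by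
    intro x hx hx1
    rw [hgamma x hx hx1]
    exact hk x⁻¹ (hinv x hx hx1)
  have hK : 0 < C₂ * κ / c₂ := by positivity
  refine ⟨k, c₂, C₂, C₂ * κ / c₂, hc₂, hC₂, hK, hkpos, hkanti, hbnds, ?_⟩
  intro x y hx hx1 hy hy1 hxy
  have hs := hinv x hx hx1
  have hu := hinv y hy hy1
  have hus : y⁻¹ ≤ D * x⁻¹ := by
    nlinarith [mul_inv_cancel₀ hx.ne', mul_inv_cancel₀ hy.ne',
      inv_pos.mpr hx, inv_pos.mpr hy,
      mul_le_mul_of_nonneg_left hxy (mul_nonneg (inv_nonneg.2 hy.le) (inv_nonneg.2 hx.le))]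
  have hA : x * gammaB b x ≤ C₂ * (κ * k y⁻¹) := by
    calc x * gammaB b x ≤ C₂ * k x⁻¹ := (hbnds x hx hx1).2
      _ ≤ C₂ * (κ * k y⁻¹) :=
        mul_le_mul_of_nonneg_left (hquasi x⁻¹ y⁻¹ hs hu hus) hC₂.le
  have hB : c₂ * k y⁻¹ ≤ y * gammaB b y := (hbnds y hy hy1).1
  have hKc : C₂ * κ / c₂ * c₂ = C₂ * κ := div_mul_cancel₀ _ hc₂.ne'
  nlinarith [mul_le_mul_of_nonneg_left hB hK.le, hkpos y⁻¹ hu]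


section chi
variable (μ : Measure Ω) [IsProbabilityMeasure μ] (p : Ω → ℝ)

lemma indicator_abs_le_one (A : Set Ω) (ω : Ω) : |A.indicator (1 : Ω → ℝ) ω| ≤ 1 := by
  by_cases h : ω ∈ A
  · simp [Set.indicator_of_mem h]
  · simp [Set.indicator_of_notMem h]

lemma indicator_abs_nonneg (A : Set Ω) (ω : Ω) : 0 ≤ |A.indicator (1 : Ω → ℝ) ω| :=
  abs_nonneg _

lemma one_mem_chiSet (A : Set Ω) :
    (1:ℝ) ∈ {lam : ℝ | 0 < lam ∧
      ∫⁻ ω, ENNReal.ofReal ((|A.indicator (1 : Ω → ℝ) ω| / lam) ^ p ω) ∂μ ≤ 1} := by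
  refine ⟨one_pos, ?_⟩
  have hle : ∀ ω, ENNReal.ofReal ((|A.indicator (1 : Ω → ℝ) ω| / 1) ^ p ω) ≤ 1 := by
    intro ω
    rw [div_one]
    by_cases h : ω ∈ A
    · simp [Set.indicator_of_mem h]
    · simp only [Set.indicator_of_notMem h, abs_zero]
      rcases eq_or_ne (p ω) 0 with h0 | h0
      · simp [h0]
      · rw [Real.zero_rpow h0]; simp
  calc ∫⁻ ω, ENNReal.ofReal ((|A.indicator (1 : Ω → ℝ) ω| / 1) ^ p ω) ∂μ
      ≤ ∫⁻ _, 1 ∂μ := lintegral_mono hle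
    _ = 1 := by simp

lemma chiSet_bddBelow (A : Set Ω) :
    BddBelow {lam : ℝ | 0 < lam ∧
      ∫⁻ ω, ENNReal.ofReal ((|A.indicator (1 : Ω → ℝ) ω| / lam) ^ p ω) ∂μ ≤ 1} :=
  ⟨0, fun _ hx => hx.1.le⟩

lemma chiNorm_nonneg (A : Set Ω) : 0 ≤ chiNorm μ p A :=
  Real.sInf_nonneg fun _ hx => hx.1.le

lemma chiNorm_le_one (A : Set Ω) : chiNorm μ p A ≤ 1 :=
  csInf_le (chiSet_bddBelow μ p A) (one_mem_chiSet μ p A)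

lemma chiNorm_mono (hp0 : ∀ᵐ ω ∂μ, 0 ≤ p ω) {A B : Set Ω} (hAB : A ⊆ B) :
    chiNorm μ p A ≤ chiNorm μ p B := by
  apply csInf_le_csInf (chiSet_bddBelow μ p A) ⟨1, one_mem_chiSet μ p B⟩
  rintro lam ⟨hlam, hint⟩
  refine ⟨hlam, le_trans (lintegral_mono_ae ?_) hint⟩
  filter_upwards [hp0] with ω hω
  apply ENNReal.ofReal_le_ofReal
  apply Real.rpow_le_rpow (by positivity) ?_ hω
  apply div_le_div_of_nonneg_right ?_ hlam.le
  by_cases h : ω ∈ A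
  · simp [Set.indicator_of_mem h, Set.indicator_of_mem (hAB h)]
  · simp only [Set.indicator_of_notMem h, abs_zero]
    exact abs_nonneg _
end chi

section chi2
variable (μ : Measure Ω) [IsProbabilityMeasure μ] (p : Ω → ℝ)

lemma rpow_D_bound {pl : ℝ} (hpl : 0 < pl) {lam0 : ℝ} (hlam0 : 0 < lam0)
    {pw : ℝ} (hpw : pl ≤ pw) :
    (1 / ((2:ℝ) ^ ((1:ℝ)/pl) * lam0)) ^ pw ≤ 2⁻¹ * (1/lam0) ^ pw := by
  have hD : (0:ℝ) < (2:ℝ) ^ ((1:ℝ)/pl) := Real.rpow_pos_of_pos two_pos _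
  have h1 : (1 / ((2:ℝ) ^ ((1:ℝ)/pl) * lam0)) = (1 / (2:ℝ) ^ ((1:ℝ)/pl)) * (1/lam0) := by
    rw [one_div_mul_eq_div, div_div]
    ring_nf
  rw [h1, Real.mul_rpow (by positivity) (by positivity)]
  have h2 : (1 / (2:ℝ) ^ ((1:ℝ)/pl)) = (2:ℝ) ^ (-((1:ℝ)/pl)) := by
    rw [Real.rpow_neg (by norm_num), one_div]
  have h3 : ((2:ℝ) ^ (-((1:ℝ)/pl))) ^ pw = (2:ℝ) ^ ((-((1:ℝ)/pl)) * pw) :=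
    (Real.rpow_mul (by norm_num) _ _).symm
  have h4 : (-((1:ℝ)/pl)) * pw ≤ -1 := by
    have : 1 ≤ pw / pl := (one_le_div hpl).mpr hpw
    have h5 : (1:ℝ)/pl * pw = pw / pl := by ring
    nlinarith
  have h6 : (2:ℝ) ^ ((-((1:ℝ)/pl)) * pw) ≤ (2:ℝ) ^ (-1:ℝ) :=
    Real.rpow_le_rpow_of_exponent_le one_le_two h4
  rw [h2, h3]
  rw [Real.rpow_neg_one] at h6
  exact mul_le_mul_of_nonneg_right h6 (Real.rpow_nonneg (by positivity) _)

lemma chiNorm_quasi_subadd {pl : ℝ} (hpl : 0 < pl) (hp : ∀ᵐ ω ∂μ, pl ≤ p ω)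
    {A B E : Set Ω} (hA : MeasurableSet A) (hE : E ⊆ A ∪ B) :
    chiNorm μ p E ≤ 2 ^ ((1:ℝ)/pl) * max (chiNorm μ p A) (chiNorm μ p B) := by
  set D : ℝ := 2 ^ ((1:ℝ)/pl) with hDdef
  have hD : (0:ℝ) < D := Real.rpow_pos_of_pos two_pos _
  -- main claim
  have claim : ∀ lamA lamB : ℝ,
      lamA ∈ {lam : ℝ | 0 < lam ∧
        ∫⁻ ω, ENNReal.ofReal ((|A.indicator (1 : Ω → ℝ) ω| / lam) ^ p ω) ∂μ ≤ 1} →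
      lamB ∈ {lam : ℝ | 0 < lam ∧
        ∫⁻ ω, ENNReal.ofReal ((|B.indicator (1 : Ω → ℝ) ω| / lam) ^ p ω) ∂μ ≤ 1} →
      chiNorm μ p E ≤ D * max lamA lamB := by
    rintro lamA lamB ⟨hlamA, hintA⟩ ⟨lamBpos, hintB⟩
    set lam : ℝ := D * max lamA lamB with hlamdef
    have hlam : 0 < lam := mul_pos hD (lt_max_of_lt_left hlamA)
    apply csInf_le (chiSet_bddBelow μ p E)
    refine ⟨hlam, ?_⟩
    set F : Ω → ℝ≥0∞ := fun ω =>
      ENNReal.ofReal ((|E.indicator (1 : Ω → ℝ) ω| / lam) ^ p ω) with hF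
    have key : ∀ (lam0 : ℝ), 0 < lam0 → lam0 ≤ max lamA lamB → ∀ ω, ω ∈ E → pl ≤ p ω →
        F ω ≤ ENNReal.ofReal (2⁻¹ * (1 / lam0) ^ p ω) := by
      intro lam0 hlam0 hle ω hωE hωp
      have hp0 : 0 ≤ p ω := le_trans hpl.le hωp
      apply ENNReal.ofReal_le_ofReal
      calc (|E.indicator (1 : Ω → ℝ) ω| / lam) ^ p ω
          ≤ (1 / lam) ^ p ω := by
            apply Real.rpow_le_rpow (by positivity) ?_ hp0
            exact div_le_div_of_nonneg_right (indicator_abs_le_one E ω) hlam.le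
        _ ≤ (1 / (D * lam0)) ^ p ω := by
            apply Real.rpow_le_rpow (by positivity) ?_ hp0
            apply one_div_le_one_div_of_le (by positivity)
            exact mul_le_mul_of_nonneg_left hle hD.le
        _ ≤ 2⁻¹ * (1 / lam0) ^ p ω := rpow_D_bound hpl hlam0 hωp
    have hFzero : ∀ ω, ω ∉ E → pl ≤ p ω → F ω = 0 := by
      intro ω hω hωp
      simp only [hF, Set.indicator_of_notMem hω, abs_zero, zero_div]
      rw [Real.zero_rpow (by nlinarith)]
      simp
    have hhalf : ENNReal.ofReal (2⁻¹ : ℝ) = 2⁻¹ := by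
      rw [show ((2:ℝ)⁻¹) = 1/2 by norm_num]
      rw [ENNReal.ofReal_div_of_pos two_pos]
      simp
    have hAside : ∫⁻ ω in A, F ω ∂μ ≤ 2⁻¹ := by
      have hb : ∀ᵐ ω ∂(μ.restrict A), F ω ≤
          ENNReal.ofReal (2⁻¹ * (|A.indicator (1 : Ω → ℝ) ω| / lamA) ^ p ω) := by
        filter_upwards [ae_restrict_mem hA, ae_restrict_of_ae hp] with ω hωA hωp
        rw [Set.indicator_of_mem hωA]
        simp only [Pi.one_apply, abs_one]
        by_cases hωE : ω ∈ E
        · exact key lamA hlamA (le_max_left _ _) ω hωE hωp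
        · rw [hFzero ω hωE hωp]; exact zero_le
      calc ∫⁻ ω in A, F ω ∂μ
          ≤ ∫⁻ ω in A, ENNReal.ofReal (2⁻¹ * (|A.indicator (1 : Ω → ℝ) ω| / lamA) ^ p ω) ∂μ :=
            lintegral_mono_ae hb
        _ = ∫⁻ ω in A, ENNReal.ofReal (2⁻¹:ℝ) *
              ENNReal.ofReal ((|A.indicator (1 : Ω → ℝ) ω| / lamA) ^ p ω) ∂μ := by
            congr 1; funext ω; rw [← ENNReal.ofReal_mul (by norm_num)]
        _ = ENNReal.ofReal (2⁻¹:ℝ) *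
              ∫⁻ ω in A, ENNReal.ofReal ((|A.indicator (1 : Ω → ℝ) ω| / lamA) ^ p ω) ∂μ :=
            lintegral_const_mul' _ _ ENNReal.ofReal_ne_top
        _ ≤ ENNReal.ofReal (2⁻¹:ℝ) * 1 := by
            apply mul_le_mul_right (le_trans (setLIntegral_le_lintegral _ _) hintA)
        _ ≤ 2⁻¹ := by rw [hhalf, mul_one]
    have hAcside : ∫⁻ ω in Aᶜ, F ω ∂μ ≤ 2⁻¹ := by
      have hb : ∀ᵐ ω ∂(μ.restrict Aᶜ), F ω ≤
          ENNReal.ofReal (2⁻¹ * (|B.indicator (1 : Ω → ℝ) ω| / lamB) ^ p ω) := by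
        filter_upwards [ae_restrict_mem hA.compl, ae_restrict_of_ae hp] with ω hωA hωp
        by_cases hωE : ω ∈ E
        · have hωB : ω ∈ B := by
            rcases hE hωE with h | h
            · exact absurd h hωA
            · exact h
          rw [Set.indicator_of_mem hωB]
          simp only [Pi.one_apply, abs_one]
          exact key lamB lamBpos (le_max_right _ _) ω hωE hωp
        · rw [hFzero ω hωE hωp]; exact zero_le
      calc ∫⁻ ω in Aᶜ, F ω ∂μ
          ≤ ∫⁻ ω in Aᶜ, ENNReal.ofReal (2⁻¹ * (|B.indicator (1 : Ω → ℝ) ω| / lamB) ^ p ω) ∂μ :=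
            lintegral_mono_ae hb
        _ = ∫⁻ ω in Aᶜ, ENNReal.ofReal (2⁻¹:ℝ) *
              ENNReal.ofReal ((|B.indicator (1 : Ω → ℝ) ω| / lamB) ^ p ω) ∂μ := by
            congr 1; funext ω; rw [← ENNReal.ofReal_mul (by norm_num)]
        _ = ENNReal.ofReal (2⁻¹:ℝ) *
              ∫⁻ ω in Aᶜ, ENNReal.ofReal ((|B.indicator (1 : Ω → ℝ) ω| / lamB) ^ p ω) ∂μ :=
            lintegral_const_mul' _ _ ENNReal.ofReal_ne_top
        _ ≤ ENNReal.ofReal (2⁻¹:ℝ) * 1 := by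
            apply mul_le_mul_right (le_trans (setLIntegral_le_lintegral _ _) hintB)
        _ ≤ 2⁻¹ := by rw [hhalf, mul_one]
    calc ∫⁻ ω, F ω ∂μ = ∫⁻ ω in A, F ω ∂μ + ∫⁻ ω in Aᶜ, F ω ∂μ :=
          (lintegral_add_compl F hA).symm
      _ ≤ 2⁻¹ + 2⁻¹ := add_le_add hAside hAcside
      _ = 1 := ENNReal.inv_two_add_inv_two
  -- now pass to infima
  have main : ∀ ε : ℝ, 0 < ε →
      chiNorm μ p E ≤ D * (max (chiNorm μ p A) (chiNorm μ p B) + ε) := by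
    intro ε hε
    obtain ⟨lamA, hlamA, hlamA'⟩ := exists_lt_of_csInf_lt
      (⟨1, one_mem_chiSet μ p A⟩ : Set.Nonempty _)
      (lt_add_of_pos_right (chiNorm μ p A) hε)
    obtain ⟨lamB, hlamB, hlamB'⟩ := exists_lt_of_csInf_lt
      (⟨1, one_mem_chiSet μ p B⟩ : Set.Nonempty _)
      (lt_add_of_pos_right (chiNorm μ p B) hε)
    calc chiNorm μ p E ≤ D * max lamA lamB := claim lamA lamB hlamA hlamB
      _ ≤ D * (max (chiNorm μ p A) (chiNorm μ p B) + ε) := by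
        apply mul_le_mul_of_nonneg_left ?_ hD.le
        rcases max_cases lamA lamB with ⟨h1, _⟩ | ⟨h1, _⟩ <;> rw [h1]
        · exact le_trans hlamA'.le (add_le_add_left (le_max_left _ _) ε)
        · exact le_trans hlamB'.le (add_le_add_left (le_max_right _ _) ε)
  by_contra hcon
  push_neg at hcon
  set M := max (chiNorm μ p A) (chiNorm μ p B) with hM
  set δ := chiNorm μ p E - D * M with hδdef
  have hδpos : 0 < δ := by simp only [hδdef]; linarith
  have h := main (δ / (2*D)) (by positivity)
  have hexp : D * (M + δ/(2*D)) = D*M + δ/2 := by field_simp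
  rw [hexp] at h
  simp only [hδdef] at h
  linarith
end chi2

lemma one_le_inv_of {x : ℝ} (hx : 0 < x) (hx1 : x ≤ 1) : 1 ≤ x⁻¹ := by
  nlinarith [mul_inv_cancel₀ hx.ne', inv_pos.mpr hx]

/-- measurable surrogate for `s ↦ k ((chiNorm {s < |f|})⁻¹)`. -/
def Ssur (μ : Measure Ω) (p : Ω → ℝ) (k : ℝ → ℝ) (f : Ω → ℝ) (s : ℝ) : ℝ :=
  if chiNorm μ p {ω | s < |f ω|} = 0 then 0
  else k (chiNorm μ p {ω | s < |f ω|})⁻¹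

section sur
variable (μ : Measure Ω) [IsProbabilityMeasure μ] (p : Ω → ℝ) {k : ℝ → ℝ}

lemma Ssur_nonneg (hkpos : ∀ t, 1 ≤ t → 0 < k t) (f : Ω → ℝ) (s : ℝ) :
    0 ≤ Ssur μ p k f s := by
  rw [Ssur]
  split_ifs with h
  · exact le_rfl
  · exact (hkpos _ (one_le_inv_of
      (lt_of_le_of_ne (chiNorm_nonneg μ p _) (Ne.symm h)) (chiNorm_le_one μ p _))).le

lemma Ssur_anti (hp0 : ∀ᵐ ω ∂μ, 0 ≤ p ω) (hkpos : ∀ t, 1 ≤ t → 0 < k t)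
    (hkanti : AntitoneOn k (Set.Ici 1)) (f : Ω → ℝ) :
    Antitone (Ssur μ p k f) := by
  intro s s' hss'
  have hmono : chiNorm μ p {ω | s' < |f ω|} ≤ chiNorm μ p {ω | s < |f ω|} :=
    chiNorm_mono μ p hp0 (fun ω hω => lt_of_le_of_lt hss' hω)
  rw [Ssur, Ssur]
  split_ifs with h1 h2 h2
  · exact le_rfl
  · exact (hkpos _ (one_le_inv_of
      (lt_of_le_of_ne (chiNorm_nonneg μ p _) (Ne.symm h2)) (chiNorm_le_one μ p _))).le
  · exact absurd (le_antisymm (le_trans hmono (le_of_eq h2)) (chiNorm_nonneg μ p _)) h1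
  · have h1' : 0 < chiNorm μ p {ω | s' < |f ω|} :=
      lt_of_le_of_ne (chiNorm_nonneg μ p _) (Ne.symm h1)
    have h2' : 0 < chiNorm μ p {ω | s < |f ω|} :=
      lt_of_le_of_ne (chiNorm_nonneg μ p _) (Ne.symm h2)
    apply hkanti
    · exact Set.mem_Ici.mpr (one_le_inv_of h2' (chiNorm_le_one μ p _))
    · exact Set.mem_Ici.mpr (one_le_inv_of h1' (chiNorm_le_one μ p _))
    · exact inv_anti₀ h1' hmono
end sur

section wb
variable (μ : Measure Ω) [IsProbabilityMeasure μ] (p : Ω → ℝ)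

lemma w_bounds {b k : ℝ → ℝ} {c₂ C₂ : ℝ} (hc₂ : 0 < c₂)
    (hkpos : ∀ t, 1 ≤ t → 0 < k t)
    (hbnds : ∀ x : ℝ, 0 < x → x ≤ 1 →
      c₂ * k x⁻¹ ≤ x * gammaB b x ∧ x * gammaB b x ≤ C₂ * k x⁻¹)
    (f : Ω → ℝ) (s : ℝ) (hs : 0 < s) :
    0 ≤ s * chiNorm μ p {ω | s < |f ω|} * gammaB b (chiNorm μ p {ω | s < |f ω|}) ∧
    c₂ * (s * Ssur μ p k f s) ≤
      s * chiNorm μ p {ω | s < |f ω|} * gammaB b (chiNorm μ p {ω | s < |f ω|}) ∧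
    s * chiNorm μ p {ω | s < |f ω|} * gammaB b (chiNorm μ p {ω | s < |f ω|}) ≤
      C₂ * (s * Ssur μ p k f s) := by
  rcases eq_or_lt_of_le (chiNorm_nonneg μ p {ω | s < |f ω|}) with h0 | hpos
  · rw [Ssur, if_pos h0.symm, ← h0]
    simp
  · have h1 : chiNorm μ p {ω | s < |f ω|} ≤ 1 := chiNorm_le_one μ p _
    have hb := hbnds _ hpos h1
    rw [Ssur, if_neg hpos.ne']
    have hkp := hkpos _ (one_le_inv_of hpos h1)
    have hxg : 0 < chiNorm μ p {ω | s < |f ω|} * gammaB b (chiNorm μ p {ω | s < |f ω|}) :=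
      lt_of_lt_of_le (mul_pos hc₂ hkp) hb.1
    refine ⟨?_, ?_, ?_⟩
    · rw [mul_assoc]
      exact (mul_pos hs hxg).le
    · calc c₂ * (s * k (chiNorm μ p {ω | s < |f ω|})⁻¹)
          = s * (c₂ * k (chiNorm μ p {ω | s < |f ω|})⁻¹) := by ring
        _ ≤ s * (chiNorm μ p {ω | s < |f ω|} * gammaB b (chiNorm μ p {ω | s < |f ω|})) :=
          mul_le_mul_of_nonneg_left hb.1 hs.le
        _ = s * chiNorm μ p {ω | s < |f ω|} * gammaB b (chiNorm μ p {ω | s < |f ω|}) :=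
          (mul_assoc _ _ _).symm
    · calc s * chiNorm μ p {ω | s < |f ω|} * gammaB b (chiNorm μ p {ω | s < |f ω|})
          = s * (chiNorm μ p {ω | s < |f ω|} * gammaB b (chiNorm μ p {ω | s < |f ω|})) :=
          mul_assoc _ _ _
        _ ≤ s * (C₂ * k (chiNorm μ p {ω | s < |f ω|})⁻¹) :=
          mul_le_mul_of_nonneg_left hb.2 hs.le
        _ = C₂ * (s * k (chiNorm μ p {ω | s < |f ω|})⁻¹) := by ring

lemma W_pointwise {b k : ℝ → ℝ} {pl c₂ C₂ K : ℝ} (hpl : 0 < pl)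
    (hp' : ∀ᵐ ω ∂μ, pl ≤ p ω)
    (hc₂ : 0 < c₂) (hC₂ : 0 < C₂) (hK : 0 < K)
    (hkpos : ∀ t, 1 ≤ t → 0 < k t)
    (hbnds : ∀ x : ℝ, 0 < x → x ≤ 1 →
      c₂ * k x⁻¹ ≤ x * gammaB b x ∧ x * gammaB b x ≤ C₂ * k x⁻¹)
    (hquasi : ∀ x y : ℝ, 0 < x → x ≤ 1 → 0 < y → y ≤ 1 → x ≤ 2 ^ ((1:ℝ)/pl) * y →
      x * gammaB b x ≤ K * (y * gammaB b y))
    (f g : Ω → ℝ) (hf : Measurable f) (hg : Measurable g) (t : ℝ) (ht : 0 < t) :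
    t * chiNorm μ p {ω | t < |(f+g) ω|} * gammaB b (chiNorm μ p {ω | t < |(f+g) ω|})
      ≤ 2*K*C₂ * ((t/2) * Ssur μ p k f (t/2) + (t/2) * Ssur μ p k g (t/2)) := by
  have hSf := Ssur_nonneg μ p hkpos f (t/2)
  have hSg := Ssur_nonneg μ p hkpos g (t/2)
  have hEsub : {ω | t < |(f+g) ω|} ⊆ {ω | t/2 < |f ω|} ∪ {ω | t/2 < |g ω|} := by
    intro ω hω
    simp only [Set.mem_setOf_eq, Pi.add_apply] at hω
    by_contra hc
    simp only [Set.mem_union, Set.mem_setOf_eq] at hc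
    push_neg at hc
    have := abs_add_le (f ω) (g ω)
    obtain ⟨h1, h2⟩ := hc
    linarith
  have hA : MeasurableSet {ω | t/2 < |f ω|} := measurableSet_lt measurable_const hf.abs
  have hx := chiNorm_quasi_subadd μ p hpl hp' hA hEsub
  have hD : (0:ℝ) < 2 ^ ((1:ℝ)/pl) := Real.rpow_pos_of_pos two_pos _
  rcases eq_or_lt_of_le (chiNorm_nonneg μ p {ω | t < |(f+g) ω|}) with h0 | hxpos
  · rw [← h0]
    have h4 : (0:ℝ) ≤ 2*K*C₂ * ((t/2) * Ssur μ p k f (t/2) + (t/2) * Ssur μ p k g (t/2)) := by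
      have h2 : (0:ℝ) ≤ t/2 := by linarith
      positivity
    rw [mul_zero, zero_mul]
    exact h4
  · have hx1 : chiNorm μ p {ω | t < |(f+g) ω|} ≤ 1 := chiNorm_le_one μ p _
    have hmax : 0 < max (chiNorm μ p {ω | t/2 < |f ω|}) (chiNorm μ p {ω | t/2 < |g ω|}) := by
      nlinarith
    rcases le_total (chiNorm μ p {ω | t/2 < |g ω|}) (chiNorm μ p {ω | t/2 < |f ω|}) with hvu | huv
    · have humax := max_eq_left hvu
      rw [humax] at hx hmax
      have hu1 : chiNorm μ p {ω | t/2 < |f ω|} ≤ 1 := chiNorm_le_one μ p _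
      have h1 := hquasi _ _ hxpos hx1 hmax hu1 hx
      have h2 := (hbnds _ hmax hu1).2
      have h3 : Ssur μ p k f (t/2) = k (chiNorm μ p {ω | t/2 < |f ω|})⁻¹ := if_neg hmax.ne'
      rw [h3]
      have hstep : t * chiNorm μ p {ω | t < |(f + g) ω|} *
          gammaB b (chiNorm μ p {ω | t < |(f + g) ω|}) ≤
          2*K*C₂ * ((t/2) * k (chiNorm μ p {ω | t/2 < |f ω|})⁻¹) := by
        calc t * chiNorm μ p {ω | t < |(f + g) ω|} *
            gammaB b (chiNorm μ p {ω | t < |(f + g) ω|})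
            = t * (chiNorm μ p {ω | t < |(f + g) ω|} *
              gammaB b (chiNorm μ p {ω | t < |(f + g) ω|})) := mul_assoc _ _ _
          _ ≤ t * (K * (chiNorm μ p {ω | t/2 < |f ω|} *
              gammaB b (chiNorm μ p {ω | t/2 < |f ω|}))) :=
            mul_le_mul_of_nonneg_left h1 ht.le
          _ ≤ t * (K * (C₂ * k (chiNorm μ p {ω | t/2 < |f ω|})⁻¹)) :=
            mul_le_mul_of_nonneg_left (mul_le_mul_of_nonneg_left h2 hK.le) ht.le
          _ = 2*K*C₂ * ((t/2) * k (chiNorm μ p {ω | t/2 < |f ω|})⁻¹) := by ring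
      refine le_trans hstep (mul_le_mul_of_nonneg_left ?_ (by positivity))
      exact le_add_of_nonneg_right (mul_nonneg (by linarith) hSg)
    · have humax := max_eq_right huv
      rw [humax] at hx hmax
      have hu1 : chiNorm μ p {ω | t/2 < |g ω|} ≤ 1 := chiNorm_le_one μ p _
      have h1 := hquasi _ _ hxpos hx1 hmax hu1 hx
      have h2 := (hbnds _ hmax hu1).2
      have h3 : Ssur μ p k g (t/2) = k (chiNorm μ p {ω | t/2 < |g ω|})⁻¹ := if_neg hmax.ne'
      rw [h3]
      have hstep : t * chiNorm μ p {ω | t < |(f + g) ω|} *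
          gammaB b (chiNorm μ p {ω | t < |(f + g) ω|}) ≤
          2*K*C₂ * ((t/2) * k (chiNorm μ p {ω | t/2 < |g ω|})⁻¹) := by
        calc t * chiNorm μ p {ω | t < |(f + g) ω|} *
            gammaB b (chiNorm μ p {ω | t < |(f + g) ω|})
            = t * (chiNorm μ p {ω | t < |(f + g) ω|} *
              gammaB b (chiNorm μ p {ω | t < |(f + g) ω|})) := mul_assoc _ _ _
          _ ≤ t * (K * (chiNorm μ p {ω | t/2 < |g ω|} *
              gammaB b (chiNorm μ p {ω | t/2 < |g ω|}))) :=
            mul_le_mul_of_nonneg_left h1 ht.le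
          _ ≤ t * (K * (C₂ * k (chiNorm μ p {ω | t/2 < |g ω|})⁻¹)) :=
            mul_le_mul_of_nonneg_left (mul_le_mul_of_nonneg_left h2 hK.le) ht.le
          _ = 2*K*C₂ * ((t/2) * k (chiNorm μ p {ω | t/2 < |g ω|})⁻¹) := by ring
      have hfin : 2*K*C₂ * ((t/2) * k (chiNorm μ p {ω | t/2 < |g ω|})⁻¹) ≤
          2*K*C₂ * ((t/2) * Ssur μ p k f (t/2) +
            (t/2) * k (chiNorm μ p {ω | t/2 < |g ω|})⁻¹) :=
        mul_le_mul_of_nonneg_left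
          (le_add_of_nonneg_left (mul_nonneg (by linarith) hSf)) (by positivity)
      exact le_trans hstep hfin
end wb

lemma real_add_rpow {a b r : ℝ} (ha : 0 ≤ a) (hb : 0 ≤ b) (hr : 0 ≤ r) :
    (a+b)^r ≤ 2^r * (a^r + b^r) := by
  rcases le_total a b with h | h
  · calc (a+b)^r ≤ (2*b)^r :=
        Real.rpow_le_rpow (by linarith) (by linarith) hr
      _ = 2^r * b^r := Real.mul_rpow (by norm_num) hb
      _ ≤ 2^r * (a^r + b^r) := by
        have := Real.rpow_nonneg ha r
        have h2 : (0:ℝ) ≤ 2^r := Real.rpow_nonneg (by norm_num) r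
        nlinarith
  · calc (a+b)^r ≤ (2*a)^r :=
        Real.rpow_le_rpow (by linarith) (by linarith) hr
      _ = 2^r * a^r := Real.mul_rpow (by norm_num) ha
      _ ≤ 2^r * (a^r + b^r) := by
        have := Real.rpow_nonneg hb r
        have h2 : (0:ℝ) ≤ 2^r := Real.rpow_nonneg (by norm_num) r
        nlinarith

lemma ennreal_add_rpow (x y : ℝ≥0∞) {r : ℝ} (hr : 0 ≤ r) :
    (x+y)^r ≤ 2^r * (x^r + y^r) := by
  rcases le_total x y with h | h
  · have h1 : x + y ≤ 2*y := by rw [two_mul]; exact add_le_add_left h y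
    calc (x+y)^r ≤ (2*y)^r := ENNReal.rpow_le_rpow h1 hr
      _ = 2^r * y^r := ENNReal.mul_rpow_of_nonneg _ _ hr
      _ ≤ 2^r * (x^r + y^r) := mul_le_mul_right le_add_self _
  · have h1 : x + y ≤ 2*x := by rw [two_mul]; exact add_le_add_right h x
    calc (x+y)^r ≤ (2*x)^r := ENNReal.rpow_le_rpow h1 hr
      _ = 2^r * x^r := ENNReal.mul_rpow_of_nonneg _ _ hr
      _ ≤ 2^r * (x^r + y^r) :=
        mul_le_mul_right (le_add_of_nonneg_right zero_le) _

lemma ofReal_half' : ENNReal.ofReal ((2:ℝ)⁻¹) = 2⁻¹ := by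
  rw [ENNReal.ofReal_inv_of_pos two_pos]
  norm_num


/-- Quasi-triangle inequality for variable Lorentz–Karamata quasi-norms. -/
theorem vLKNorm_add_le (μ : Measure Ω) [IsProbabilityMeasure μ]
    (p : Ω → ℝ) (pl pu : ℝ) (hpl : 0 < pl) (hple : pl ≤ pu)
    (hp : ∀ᵐ ω ∂μ, pl ≤ p ω ∧ p ω ≤ pu)
    (q : ℝ≥0∞) (hq : 0 < q) (b : ℝ → ℝ) (hb : SlowlyVarying b) :
    ∃ C > (0:ℝ), ∀ f g : Ω → ℝ, Measurable f → Measurable g →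
      vLKNorm μ p q b (f + g) ≤
        ENNReal.ofReal C * (vLKNorm μ p q b f + vLKNorm μ p q b g) := by
  have hp' : ∀ᵐ ω ∂μ, pl ≤ p ω := hp.mono fun ω h => h.1
  have hp0 : ∀ᵐ ω ∂μ, 0 ≤ p ω := hp'.mono fun ω h => le_trans hpl.le h
  have hD1 : 1 ≤ (2:ℝ) ^ ((1:ℝ)/pl) := by
    calc (1:ℝ) = 2 ^ (0:ℝ) := (Real.rpow_zero 2).symm
      _ ≤ 2 ^ ((1:ℝ)/pl) := Real.rpow_le_rpow_of_exponent_le one_le_two (by positivity)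
  obtain ⟨k, c₂, C₂, K, hc₂, hC₂, hK, hkpos, hkanti, hbnds, hquasi⟩ :=
    phi_facts hb (2 ^ ((1:ℝ)/pl)) hD1
  rcases eq_or_ne q ∞ with hqtop | hqtop
  · -- q = ∞
    subst hqtop
    refine ⟨2*K*C₂/c₂, by positivity, ?_⟩
    intro f g hf hg
    simp only [vLKNorm, reduceIte]
    apply iSup₂_le
    intro t ht
    rw [Set.mem_Ioi] at ht
    have ht2 : (0:ℝ) < t/2 := by linarith
    have hW := W_pointwise μ p hpl hp' hc₂ hC₂ hK hkpos hbnds hquasi f g hf hg t ht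
    have hwf := w_bounds μ p hc₂ hkpos hbnds f (t/2) ht2
    have hwg := w_bounds μ p hc₂ hkpos hbnds g (t/2) ht2
    have hcomb : t * chiNorm μ p {ω | t < |(f+g) ω|} *
        gammaB b (chiNorm μ p {ω | t < |(f+g) ω|})
        ≤ (2*K*C₂/c₂) *
          ((t/2) * chiNorm μ p {ω | t/2 < |f ω|} * gammaB b (chiNorm μ p {ω | t/2 < |f ω|})
          + (t/2) * chiNorm μ p {ω | t/2 < |g ω|} *
            gammaB b (chiNorm μ p {ω | t/2 < |g ω|})) := by
      have h1 := hwf.2.1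
      have h2 := hwg.2.1
      have h3 : c₂ * ((t/2) * Ssur μ p k f (t/2) + (t/2) * Ssur μ p k g (t/2)) ≤
          (t/2) * chiNorm μ p {ω | t/2 < |f ω|} * gammaB b (chiNorm μ p {ω | t/2 < |f ω|})
          + (t/2) * chiNorm μ p {ω | t/2 < |g ω|} *
            gammaB b (chiNorm μ p {ω | t/2 < |g ω|}) := by
        rw [mul_add]
        exact add_le_add h1 h2
      have h5 : 2*K*C₂*((t/2) * Ssur μ p k f (t/2) + (t/2) * Ssur μ p k g (t/2))
          = (2*K*C₂/c₂) * (c₂*((t/2) * Ssur μ p k f (t/2) + (t/2) * Ssur μ p k g (t/2))) := by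
        field_simp
      have h6 := mul_le_mul_of_nonneg_left h3 (by positivity : (0:ℝ) ≤ 2*K*C₂/c₂)
      calc t * chiNorm μ p {ω | t < |(f+g) ω|} *
          gammaB b (chiNorm μ p {ω | t < |(f+g) ω|})
          ≤ 2*K*C₂*((t/2) * Ssur μ p k f (t/2) + (t/2) * Ssur μ p k g (t/2)) := hW
        _ = (2*K*C₂/c₂) * (c₂*((t/2) * Ssur μ p k f (t/2) + (t/2) * Ssur μ p k g (t/2))) := h5
        _ ≤ _ := h6
    calc ENNReal.ofReal (t * chiNorm μ p {ω | t < |(f+g) ω|} *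
          gammaB b (chiNorm μ p {ω | t < |(f+g) ω|}))
        ≤ ENNReal.ofReal ((2*K*C₂/c₂) *
          ((t/2) * chiNorm μ p {ω | t/2 < |f ω|} * gammaB b (chiNorm μ p {ω | t/2 < |f ω|})
          + (t/2) * chiNorm μ p {ω | t/2 < |g ω|} *
            gammaB b (chiNorm μ p {ω | t/2 < |g ω|}))) := ENNReal.ofReal_le_ofReal hcomb
      _ = ENNReal.ofReal (2*K*C₂/c₂) *
          (ENNReal.ofReal ((t/2) * chiNorm μ p {ω | t/2 < |f ω|} *
            gammaB b (chiNorm μ p {ω | t/2 < |f ω|}))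
          + ENNReal.ofReal ((t/2) * chiNorm μ p {ω | t/2 < |g ω|} *
            gammaB b (chiNorm μ p {ω | t/2 < |g ω|}))) := by
          rw [ENNReal.ofReal_mul (by positivity), ENNReal.ofReal_add hwf.1 hwg.1]
      _ ≤ ENNReal.ofReal (2*K*C₂/c₂) *
          ((⨆ s ∈ Set.Ioi (0:ℝ), ENNReal.ofReal (s * chiNorm μ p {ω | s < |f ω|} *
            gammaB b (chiNorm μ p {ω | s < |f ω|})))
          + ⨆ s ∈ Set.Ioi (0:ℝ), ENNReal.ofReal (s * chiNorm μ p {ω | s < |g ω|} *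
            gammaB b (chiNorm μ p {ω | s < |g ω|}))) := by
          apply mul_le_mul_right
          apply add_le_add
          · exact le_iSup₂ (f := fun (s:ℝ) (_ : s ∈ Set.Ioi (0:ℝ)) =>
              ENNReal.ofReal (s * chiNorm μ p {ω | s < |f ω|} *
                gammaB b (chiNorm μ p {ω | s < |f ω|}))) (t/2) (Set.mem_Ioi.mpr ht2)
          · exact le_iSup₂ (f := fun (s:ℝ) (_ : s ∈ Set.Ioi (0:ℝ)) =>
              ENNReal.ofReal (s * chiNorm μ p {ω | s < |g ω|} *
                gammaB b (chiNorm μ p {ω | s < |g ω|}))) (t/2) (Set.mem_Ioi.mpr ht2)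
  · -- q < ∞
    set qr := q.toReal with hqrdef
    have hqr : 0 < qr := ENNReal.toReal_pos hq.ne' hqtop
    refine ⟨(4*K*C₂/c₂) * 2^((1:ℝ)/qr), by positivity, ?_⟩
    intro f g hf hg
    simp only [vLKNorm, if_neg hqtop]
    have hSfm : Measurable (Ssur μ p k f) := (Ssur_anti μ p hp0 hkpos hkanti f).measurable
    have hSgm : Measurable (Ssur μ p k g) := (Ssur_anti μ p hp0 hkpos hkanti g).measurable
    have hmf : Measurable (fun t : ℝ => (t/2) * Ssur μ p k f (t/2)) :=
      (measurable_id.div_const 2).mul (hSfm.comp (measurable_id.div_const 2))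
    have hmg : Measurable (fun t : ℝ => (t/2) * Ssur μ p k g (t/2)) :=
      (measurable_id.div_const 2).mul (hSgm.comp (measurable_id.div_const 2))
    have hrpowm : Measurable (fun x : ℝ => x ^ qr) :=
      (Real.continuous_rpow_const hqr.le).measurable
    have hPfm : Measurable (fun t : ℝ =>
        ENNReal.ofReal (((t/2) * Ssur μ p k f (t/2)) ^ qr / t)) :=
      ((hrpowm.comp hmf).div measurable_id).ennreal_ofReal
    have hPgm : Measurable (fun t : ℝ =>
        ENNReal.ofReal (((t/2) * Ssur μ p k g (t/2)) ^ qr / t)) :=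
      ((hrpowm.comp hmg).div measurable_id).ennreal_ofReal
    -- step 1 : pointwise
    have step1 : ∀ᵐ t ∂(volume.restrict (Set.Ioi (0:ℝ))),
        ENNReal.ofReal ((t * chiNorm μ p {ω | t < |(f+g) ω|} *
          gammaB b (chiNorm μ p {ω | t < |(f+g) ω|})) ^ qr / t) ≤
        ENNReal.ofReal ((4*K*C₂)^qr) *
          (ENNReal.ofReal (((t/2) * Ssur μ p k f (t/2)) ^ qr / t)
           + ENNReal.ofReal (((t/2) * Ssur μ p k g (t/2)) ^ qr / t)) := by
      filter_upwards [ae_restrict_mem measurableSet_Ioi] with t ht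
      rw [Set.mem_Ioi] at ht
      have ht2 : (0:ℝ) < t/2 := by linarith
      have hW := W_pointwise μ p hpl hp' hc₂ hC₂ hK hkpos hbnds hquasi f g hf hg t ht
      have hWnn := (w_bounds μ p hc₂ hkpos hbnds (f+g) t ht).1
      have hA0 : 0 ≤ (t/2) * Ssur μ p k f (t/2) :=
        mul_nonneg ht2.le (Ssur_nonneg μ p hkpos f (t/2))
      have hB0 : 0 ≤ (t/2) * Ssur μ p k g (t/2) :=
        mul_nonneg ht2.le (Ssur_nonneg μ p hkpos g (t/2))
      have h1 : (t * chiNorm μ p {ω | t < |(f+g) ω|} *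
          gammaB b (chiNorm μ p {ω | t < |(f+g) ω|})) ^ qr ≤
          (2*K*C₂)^qr * ((t/2) * Ssur μ p k f (t/2) + (t/2) * Ssur μ p k g (t/2)) ^ qr := by
        rw [← Real.mul_rpow (by positivity) (by positivity)]
        exact Real.rpow_le_rpow hWnn hW hqr.le
      have h2 : ((t/2) * Ssur μ p k f (t/2) + (t/2) * Ssur μ p k g (t/2)) ^ qr ≤
          2^qr * (((t/2) * Ssur μ p k f (t/2))^qr + ((t/2) * Ssur μ p k g (t/2))^qr) :=
        real_add_rpow hA0 hB0 hqr.le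
      have h4 : (t * chiNorm μ p {ω | t < |(f+g) ω|} *
          gammaB b (chiNorm μ p {ω | t < |(f+g) ω|})) ^ qr ≤
          (4*K*C₂)^qr * (((t/2) * Ssur μ p k f (t/2))^qr
            + ((t/2) * Ssur μ p k g (t/2))^qr) := by
        have h5 : (2*K*C₂:ℝ)^qr * (2^qr * (((t/2) * Ssur μ p k f (t/2))^qr
            + ((t/2) * Ssur μ p k g (t/2))^qr)) = (4*K*C₂)^qr *
            (((t/2) * Ssur μ p k f (t/2))^qr + ((t/2) * Ssur μ p k g (t/2))^qr) := by
          rw [← mul_assoc, ← Real.mul_rpow (by positivity) (by norm_num),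
            show ((2:ℝ)*K*C₂*2) = 4*K*C₂ from by ring]
        calc (t * chiNorm μ p {ω | t < |(f+g) ω|} *
            gammaB b (chiNorm μ p {ω | t < |(f+g) ω|})) ^ qr
            ≤ (2*K*C₂)^qr * ((t/2) * Ssur μ p k f (t/2) + (t/2) * Ssur μ p k g (t/2)) ^ qr := h1
          _ ≤ (2*K*C₂)^qr * (2^qr * (((t/2) * Ssur μ p k f (t/2))^qr
              + ((t/2) * Ssur μ p k g (t/2))^qr)) :=
            mul_le_mul_of_nonneg_left h2 (Real.rpow_nonneg (by positivity) _)
          _ = _ := h5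
      have h6 : (t * chiNorm μ p {ω | t < |(f+g) ω|} *
          gammaB b (chiNorm μ p {ω | t < |(f+g) ω|})) ^ qr / t ≤
          (4*K*C₂)^qr * (((t/2) * Ssur μ p k f (t/2))^qr / t
            + ((t/2) * Ssur μ p k g (t/2))^qr / t) := by
        calc (t * chiNorm μ p {ω | t < |(f+g) ω|} *
            gammaB b (chiNorm μ p {ω | t < |(f+g) ω|})) ^ qr / t
            ≤ ((4*K*C₂)^qr * (((t/2) * Ssur μ p k f (t/2))^qr
              + ((t/2) * Ssur μ p k g (t/2))^qr)) / t :=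
            div_le_div_of_nonneg_right h4 ht.le
          _ = _ := by ring
      calc ENNReal.ofReal ((t * chiNorm μ p {ω | t < |(f+g) ω|} *
            gammaB b (chiNorm μ p {ω | t < |(f+g) ω|})) ^ qr / t)
          ≤ ENNReal.ofReal ((4*K*C₂)^qr * (((t/2) * Ssur μ p k f (t/2))^qr / t
            + ((t/2) * Ssur μ p k g (t/2))^qr / t)) := ENNReal.ofReal_le_ofReal h6
        _ = ENNReal.ofReal ((4*K*C₂)^qr) *
            (ENNReal.ofReal (((t/2) * Ssur μ p k f (t/2)) ^ qr / t)
             + ENNReal.ofReal (((t/2) * Ssur μ p k g (t/2)) ^ qr / t)) := by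
          rw [ENNReal.ofReal_mul (by positivity),
            ENNReal.ofReal_add (by positivity) (by positivity)]
    -- step 2 : integrate
    have step2 : (∫⁻ t in Set.Ioi (0:ℝ), ENNReal.ofReal
        ((t * chiNorm μ p {ω | t < |(f+g) ω|} *
          gammaB b (chiNorm μ p {ω | t < |(f+g) ω|})) ^ qr / t)) ≤
        ENNReal.ofReal ((4*K*C₂)^qr) *
          ((∫⁻ t in Set.Ioi (0:ℝ), ENNReal.ofReal (((t/2) * Ssur μ p k f (t/2)) ^ qr / t))
          + ∫⁻ t in Set.Ioi (0:ℝ), ENNReal.ofReal (((t/2) * Ssur μ p k g (t/2)) ^ qr / t)) := by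
      calc (∫⁻ t in Set.Ioi (0:ℝ), ENNReal.ofReal
          ((t * chiNorm μ p {ω | t < |(f+g) ω|} *
            gammaB b (chiNorm μ p {ω | t < |(f+g) ω|})) ^ qr / t))
          ≤ ∫⁻ t in Set.Ioi (0:ℝ), ENNReal.ofReal ((4*K*C₂)^qr) *
            (ENNReal.ofReal (((t/2) * Ssur μ p k f (t/2)) ^ qr / t)
             + ENNReal.ofReal (((t/2) * Ssur μ p k g (t/2)) ^ qr / t)) :=
          lintegral_mono_ae step1
        _ = ENNReal.ofReal ((4*K*C₂)^qr) * ∫⁻ t in Set.Ioi (0:ℝ),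
            (ENNReal.ofReal (((t/2) * Ssur μ p k f (t/2)) ^ qr / t)
             + ENNReal.ofReal (((t/2) * Ssur μ p k g (t/2)) ^ qr / t)) :=
          lintegral_const_mul' _ _ ENNReal.ofReal_ne_top
        _ = _ := by rw [lintegral_add_left hPfm]
    -- step 3 : change of variables
    have step3 : ∀ (φ : Ω → ℝ), Measurable (Ssur μ p k φ) →
        (∫⁻ t in Set.Ioi (0:ℝ), ENNReal.ofReal (((t/2) * Ssur μ p k φ (t/2)) ^ qr / t))
        = ∫⁻ s in Set.Ioi (0:ℝ), ENNReal.ofReal ((s * Ssur μ p k φ s) ^ qr / s) := by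
      intro φ hφm
      have hcong : ∀ᵐ t ∂(volume.restrict (Set.Ioi (0:ℝ))),
          ENNReal.ofReal (((t/2) * Ssur μ p k φ (t/2)) ^ qr / t) =
          2⁻¹ * (fun s => ENNReal.ofReal ((s * Ssur μ p k φ s) ^ qr / s)) (t/2) := by
        filter_upwards [ae_restrict_mem measurableSet_Ioi] with t ht
        rw [Set.mem_Ioi] at ht
        have h1 : ((t/2) * Ssur μ p k φ (t/2)) ^ qr / t =
            (2:ℝ)⁻¹ * (((t/2) * Ssur μ p k φ (t/2)) ^ qr / (t/2)) := by
          field_simp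
        show _ = 2⁻¹ * ENNReal.ofReal (((t/2) * Ssur μ p k φ (t/2)) ^ qr / (t/2))
        rw [h1, ENNReal.ofReal_mul (by norm_num), ofReal_half']
      rw [lintegral_congr_ae hcong,
        lintegral_const_mul' _ _ (by simp : (2:ℝ≥0∞)⁻¹ ≠ ⊤),
        lintegral_Ioi_half (fun s => ENNReal.ofReal ((s * Ssur μ p k φ s) ^ qr / s)),
        ← mul_assoc, ENNReal.inv_mul_cancel (by norm_num) (by norm_num), one_mul]
    -- step 4 : compare surrogate with true integrand
    have step4 : ∀ (φ : Ω → ℝ),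
        (∫⁻ s in Set.Ioi (0:ℝ), ENNReal.ofReal ((s * Ssur μ p k φ s) ^ qr / s)) ≤
        ENNReal.ofReal ((1/c₂)^qr) * ∫⁻ s in Set.Ioi (0:ℝ), ENNReal.ofReal
          ((s * chiNorm μ p {ω | s < |φ ω|} *
            gammaB b (chiNorm μ p {ω | s < |φ ω|})) ^ qr / s) := by
      intro φ
      have hpt : ∀ᵐ s ∂(volume.restrict (Set.Ioi (0:ℝ))),
          ENNReal.ofReal ((s * Ssur μ p k φ s) ^ qr / s) ≤
          ENNReal.ofReal ((1/c₂)^qr) * ENNReal.ofReal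
            ((s * chiNorm μ p {ω | s < |φ ω|} *
              gammaB b (chiNorm μ p {ω | s < |φ ω|})) ^ qr / s) := by
        filter_upwards [ae_restrict_mem measurableSet_Ioi] with s hs
        rw [Set.mem_Ioi] at hs
        have hwb := w_bounds μ p hc₂ hkpos hbnds φ s hs
        have hm0 : 0 ≤ s * Ssur μ p k φ s := mul_nonneg hs.le (Ssur_nonneg μ p hkpos φ s)
        have h1 : s * Ssur μ p k φ s ≤ (1/c₂) * (s * chiNorm μ p {ω | s < |φ ω|} *
            gammaB b (chiNorm μ p {ω | s < |φ ω|})) := by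
          have h2 := mul_le_mul_of_nonneg_left hwb.2.1 (by positivity : (0:ℝ) ≤ 1/c₂)
          have heq : (1/c₂) * (c₂ * (s * Ssur μ p k φ s)) = s * Ssur μ p k φ s := by
            field_simp
          calc s * Ssur μ p k φ s = (1/c₂) * (c₂ * (s * Ssur μ p k φ s)) := heq.symm
            _ ≤ _ := h2
        have h3 : (s * Ssur μ p k φ s) ^ qr ≤ (1/c₂)^qr *
            (s * chiNorm μ p {ω | s < |φ ω|} *
              gammaB b (chiNorm μ p {ω | s < |φ ω|})) ^ qr := by
          rw [← Real.mul_rpow (by positivity) hwb.1]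
          exact Real.rpow_le_rpow hm0 h1 hqr.le
        have h4 : (s * Ssur μ p k φ s) ^ qr / s ≤ (1/c₂)^qr *
            ((s * chiNorm μ p {ω | s < |φ ω|} *
              gammaB b (chiNorm μ p {ω | s < |φ ω|})) ^ qr / s) := by
          calc (s * Ssur μ p k φ s) ^ qr / s
              ≤ ((1/c₂)^qr * (s * chiNorm μ p {ω | s < |φ ω|} *
                gammaB b (chiNorm μ p {ω | s < |φ ω|})) ^ qr) / s :=
              div_le_div_of_nonneg_right h3 hs.le
            _ = _ := by ring
        rw [← ENNReal.ofReal_mul (by positivity)]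
        exact ENNReal.ofReal_le_ofReal h4
      calc (∫⁻ s in Set.Ioi (0:ℝ), ENNReal.ofReal ((s * Ssur μ p k φ s) ^ qr / s))
          ≤ ∫⁻ s in Set.Ioi (0:ℝ), ENNReal.ofReal ((1/c₂)^qr) * ENNReal.ofReal
            ((s * chiNorm μ p {ω | s < |φ ω|} *
              gammaB b (chiNorm μ p {ω | s < |φ ω|})) ^ qr / s) := lintegral_mono_ae hpt
        _ = _ := lintegral_const_mul' _ _ ENNReal.ofReal_ne_top
    -- combine
    have total : (∫⁻ t in Set.Ioi (0:ℝ), ENNReal.ofReal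
        ((t * chiNorm μ p {ω | t < |(f+g) ω|} *
          gammaB b (chiNorm μ p {ω | t < |(f+g) ω|})) ^ qr / t)) ≤
        ENNReal.ofReal ((4*K*C₂/c₂)^qr) *
          ((∫⁻ s in Set.Ioi (0:ℝ), ENNReal.ofReal ((s * chiNorm μ p {ω | s < |f ω|} *
              gammaB b (chiNorm μ p {ω | s < |f ω|})) ^ qr / s))
          + ∫⁻ s in Set.Ioi (0:ℝ), ENNReal.ofReal ((s * chiNorm μ p {ω | s < |g ω|} *
              gammaB b (chiNorm μ p {ω | s < |g ω|})) ^ qr / s)) := by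
      have hf4 := le_trans (le_of_eq (step3 f hSfm)) (step4 f)
      have hg4 := le_trans (le_of_eq (step3 g hSgm)) (step4 g)
      calc (∫⁻ t in Set.Ioi (0:ℝ), ENNReal.ofReal
          ((t * chiNorm μ p {ω | t < |(f+g) ω|} *
            gammaB b (chiNorm μ p {ω | t < |(f+g) ω|})) ^ qr / t))
          ≤ ENNReal.ofReal ((4*K*C₂)^qr) *
            ((∫⁻ t in Set.Ioi (0:ℝ), ENNReal.ofReal (((t/2) * Ssur μ p k f (t/2)) ^ qr / t))
            + ∫⁻ t in Set.Ioi (0:ℝ), ENNReal.ofReal (((t/2) * Ssur μ p k g (t/2)) ^ qr / t)) :=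
          step2
        _ ≤ ENNReal.ofReal ((4*K*C₂)^qr) *
            (ENNReal.ofReal ((1/c₂)^qr) * (∫⁻ s in Set.Ioi (0:ℝ),
              ENNReal.ofReal ((s * chiNorm μ p {ω | s < |f ω|} *
                gammaB b (chiNorm μ p {ω | s < |f ω|})) ^ qr / s))
            + ENNReal.ofReal ((1/c₂)^qr) * ∫⁻ s in Set.Ioi (0:ℝ),
              ENNReal.ofReal ((s * chiNorm μ p {ω | s < |g ω|} *
                gammaB b (chiNorm μ p {ω | s < |g ω|})) ^ qr / s)) :=
          mul_le_mul_right (add_le_add hf4 hg4) _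
        _ = (ENNReal.ofReal ((4*K*C₂)^qr) * ENNReal.ofReal ((1/c₂)^qr)) *
            ((∫⁻ s in Set.Ioi (0:ℝ), ENNReal.ofReal ((s * chiNorm μ p {ω | s < |f ω|} *
                gammaB b (chiNorm μ p {ω | s < |f ω|})) ^ qr / s))
            + ∫⁻ s in Set.Ioi (0:ℝ), ENNReal.ofReal ((s * chiNorm μ p {ω | s < |g ω|} *
                gammaB b (chiNorm μ p {ω | s < |g ω|})) ^ qr / s)) := by
          rw [← mul_add, ← mul_assoc]
        _ = ENNReal.ofReal ((4*K*C₂/c₂)^qr) *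
            ((∫⁻ s in Set.Ioi (0:ℝ), ENNReal.ofReal ((s * chiNorm μ p {ω | s < |f ω|} *
                gammaB b (chiNorm μ p {ω | s < |f ω|})) ^ qr / s))
            + ∫⁻ s in Set.Ioi (0:ℝ), ENNReal.ofReal ((s * chiNorm μ p {ω | s < |g ω|} *
                gammaB b (chiNorm μ p {ω | s < |g ω|})) ^ qr / s)) := by
          rw [← ENNReal.ofReal_mul (by positivity),
            ← Real.mul_rpow (by positivity) (by positivity)]
          congr 3
          field_simp
    -- final rpow manipulation
    have hfinal := ENNReal.rpow_le_rpow total (by positivity : (0:ℝ) ≤ 1/qr)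
    rw [ENNReal.mul_rpow_of_nonneg _ _ (by positivity : (0:ℝ) ≤ 1/qr)] at hfinal
    have hc5 : (0:ℝ) < 4*K*C₂/c₂ := by positivity
    have hconst : (ENNReal.ofReal ((4*K*C₂/c₂)^qr)) ^ (1/qr) =
        ENNReal.ofReal (4*K*C₂/c₂) := by
      rw [ENNReal.ofReal_rpow_of_pos (Real.rpow_pos_of_pos hc5 _),
        ← Real.rpow_mul hc5.le, mul_one_div_cancel hqr.ne', Real.rpow_one]
    rw [hconst] at hfinal
    have hsum := ennreal_add_rpow
      (∫⁻ s in Set.Ioi (0:ℝ), ENNReal.ofReal ((s * chiNorm μ p {ω | s < |f ω|} *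
        gammaB b (chiNorm μ p {ω | s < |f ω|})) ^ qr / s))
      (∫⁻ s in Set.Ioi (0:ℝ), ENNReal.ofReal ((s * chiNorm μ p {ω | s < |g ω|} *
        gammaB b (chiNorm μ p {ω | s < |g ω|})) ^ qr / s))
      (by positivity : (0:ℝ) ≤ 1/qr)
    have htwo : ((2:ℝ≥0∞))^((1:ℝ)/qr) = ENNReal.ofReal ((2:ℝ)^((1:ℝ)/qr)) := by
      rw [← ENNReal.ofReal_ofNat 2, ENNReal.ofReal_rpow_of_pos two_pos]
    calc (∫⁻ t in Set.Ioi (0:ℝ), ENNReal.ofReal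
        ((t * chiNorm μ p {ω | t < |(f+g) ω|} *
          gammaB b (chiNorm μ p {ω | t < |(f+g) ω|})) ^ qr / t)) ^ ((1:ℝ)/qr)
        ≤ ENNReal.ofReal (4*K*C₂/c₂) *
          (((∫⁻ s in Set.Ioi (0:ℝ), ENNReal.ofReal ((s * chiNorm μ p {ω | s < |f ω|} *
            gammaB b (chiNorm μ p {ω | s < |f ω|})) ^ qr / s))
          + ∫⁻ s in Set.Ioi (0:ℝ), ENNReal.ofReal ((s * chiNorm μ p {ω | s < |g ω|} *
            gammaB b (chiNorm μ p {ω | s < |g ω|})) ^ qr / s)) ^ ((1:ℝ)/qr)) := hfinal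
      _ ≤ ENNReal.ofReal (4*K*C₂/c₂) * (2^((1:ℝ)/qr) *
          ((∫⁻ s in Set.Ioi (0:ℝ), ENNReal.ofReal ((s * chiNorm μ p {ω | s < |f ω|} *
            gammaB b (chiNorm μ p {ω | s < |f ω|})) ^ qr / s)) ^ ((1:ℝ)/qr)
          + (∫⁻ s in Set.Ioi (0:ℝ), ENNReal.ofReal ((s * chiNorm μ p {ω | s < |g ω|} *
            gammaB b (chiNorm μ p {ω | s < |g ω|})) ^ qr / s)) ^ ((1:ℝ)/qr))) :=
        mul_le_mul_right hsum _
      _ = ENNReal.ofReal ((4*K*C₂/c₂) * 2^((1:ℝ)/qr)) *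
          ((∫⁻ s in Set.Ioi (0:ℝ), ENNReal.ofReal ((s * chiNorm μ p {ω | s < |f ω|} *
            gammaB b (chiNorm μ p {ω | s < |f ω|})) ^ qr / s)) ^ ((1:ℝ)/qr)
          + (∫⁻ s in Set.Ioi (0:ℝ), ENNReal.ofReal ((s * chiNorm μ p {ω | s < |g ω|} *
            gammaB b (chiNorm μ p {ω | s < |g ω|})) ^ qr / s)) ^ ((1:ℝ)/qr)) := by
        rw [ENNReal.ofReal_mul (by positivity), htwo]
        ring
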